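/- Let f : [a,b] → [a,b] be a continuous l-modal map. Then there exists a compact interval J = [a',b'] ⊇ [a,b] and a continuous l-modal map F : J → J such that F restricted to [a,b] equals f, F({a',b'}) ⊆ {a',b'} (F is boundary-anchored), and the topological entropy satisfies h(F) = h(f). -/

import Mathlib

open Set Dynamics Filter ENNReal UniformSpace Uniformity

namespace EntropyAux

lemma coverMincard_mono_set {X : Type*} (T : X → X) {F G : Set X} (h : F ⊆ G)
    (U : Set (X × X)) (n : ℕ) : coverMincard T F U n ≤ coverMincard T G U n := by
  refine le_iInf₂ fun s hs => ?_
  exact IsDynCoverOf.coverMincard_le_card (h.trans hs)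

lemma coverEntropy_mono_set {X : Type*} [UniformSpace X] (T : X → X) {F G : Set X} (h : F ⊆ G) :
    coverEntropy T F ≤ coverEntropy T G := by
  refine iSup₂_mono fun U _ => ?_
  refine limsup_le_limsup (Eventually.of_forall fun n => ?_)
  exact EReal.monotone_div_right_of_nonneg (Nat.cast_nonneg' n)
    (ENNReal.log_monotone (ENat.toENNReal_mono (coverMincard_mono_set T h U n)))

lemma coverEntropy_congr {X : Type*} [UniformSpace X] {T S : X → X} {A : Set X}
    (hT : Set.MapsTo T A A) (hS : Set.MapsTo S A A) (h : Set.EqOn T S A) :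
    coverEntropy T A = coverEntropy S A := by
  rw [← coverEntropy_restrict hT, ← coverEntropy_restrict hS]
  have : hT.restrict T A A = hS.restrict S A A := by
    funext x
    exact Subtype.ext (h x.2)
  rw [this]

lemma tendsto_log_mul_div (B : ℕ) (hB : 1 ≤ B) :
    Filter.Tendsto (fun n : ℕ => Real.log (B * (n + 1)) / n) Filter.atTop (nhds 0) := by
  have hBpos : (0:ℝ) < B := by exact_mod_cast hB
  have hcomp : Filter.Tendsto (fun n : ℕ => (B : ℝ) * ((n:ℝ) + 1)) Filter.atTop Filter.atTop := by
    apply Filter.Tendsto.const_mul_atTop hBpos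
    exact Filter.tendsto_atTop_add_const_right _ 1 tendsto_natCast_atTop_atTop
  have h1 : Filter.Tendsto (fun n : ℕ => Real.log (B * ((n:ℝ) + 1)) / (B * ((n:ℝ) + 1)))
      Filter.atTop (nhds 0) :=
    Real.isLittleO_log_id_atTop.tendsto_div_nhds_zero.comp hcomp
  have h2 : Filter.Tendsto (fun n : ℕ => (B:ℝ) * ((n:ℝ) + 1) / n) Filter.atTop (nhds B) := by
    have heq : (fun n : ℕ => (B:ℝ) * ((n:ℝ) + 1) / n) =ᶠ[Filter.atTop]
        fun n : ℕ => (B:ℝ) + (B:ℝ)/n := by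
      filter_upwards [Filter.eventually_gt_atTop 0] with n hn
      have : (n:ℝ) ≠ 0 := by positivity
      field_simp
    rw [Filter.tendsto_congr' heq]
    have := tendsto_const_div_atTop_nhds_zero_nat (B:ℝ)
    simpa using (tendsto_const_nhds (x := (B:ℝ)) (f := Filter.atTop)).add this
  have h3 := h1.mul h2
  rw [zero_mul] at h3
  apply h3.congr'
  filter_upwards [Filter.eventually_gt_atTop 0] with n hn
  have hn' : (n:ℝ) ≠ 0 := by positivity
  have hB' : (B:ℝ) * ((n:ℝ)+1) ≠ 0 := by positivity
  field_simp


lemma limsup_log_aux (B : ℕ) (hB : 1 ≤ B) :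
    Filter.atTop.limsup (fun n : ℕ => ENNReal.log ((B * (n+1) : ℕ) : ℝ≥0∞) / (n : EReal)) = 0 := by
  apply Filter.Tendsto.limsup_eq
  have heq : (fun n : ℕ => ENNReal.log ((B * (n+1) : ℕ) : ℝ≥0∞) / (n : EReal))
      = fun n : ℕ => ((Real.log (B * ((n:ℝ) + 1)) / (n:ℝ) : ℝ) : EReal) := by
    funext n
    have h1 : ((B * (n+1) : ℕ) : ℝ≥0∞) = ENNReal.ofReal ((B * (n+1) : ℕ) : ℝ) :=
      (ENNReal.ofReal_natCast _).symm
    have hpos : (0:ℝ) < ((B * (n+1) : ℕ) : ℝ) := by positivity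
    rw [h1, ENNReal.log_ofReal_of_pos hpos, EReal.coe_div]
    push_cast
    rfl
  rw [heq]
  rw [← EReal.coe_zero]
  exact (EReal.tendsto_coe).2 (tendsto_log_mul_div B hB)


/-- deterministic side itinerary -/
def sideItin (dL dR : Bool) (s₀ : Bool) (j : ℕ) : Bool :=
  (fun s => if s then dL else dR)^[j] s₀

lemma sideItin_succ (dL dR s₀ : Bool) (j : ℕ) :
    sideItin dL dR s₀ (j+1) = (if sideItin dL dR s₀ j then dL else dR) :=
  Function.iterate_succ_apply' _ j s₀

/-- product of collar slopes along itinerary -/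
def lamProd (mL mR : ℝ) (dL dR s₀ : Bool) (j : ℕ) : ℝ :=
  ∏ i ∈ Finset.range j, (if sideItin dL dR s₀ i then mL else mR)

lemma lamProd_zero (mL mR : ℝ) (dL dR s₀ : Bool) : lamProd mL mR dL dR s₀ 0 = 1 := by
  simp [lamProd]

lemma lamProd_succ (mL mR : ℝ) (dL dR s₀ : Bool) (j : ℕ) :
    lamProd mL mR dL dR s₀ (j+1)
      = lamProd mL mR dL dR s₀ j * (if sideItin dL dR s₀ j then mL else mR) := by
  simp [lamProd, Finset.prod_range_succ]

lemma lamProd_ne_zero (mL mR : ℝ) (dL dR s₀ : Bool) (hmL : mL ≠ 0) (hmR : mR ≠ 0) (j : ℕ) :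
    lamProd mL mR dL dR s₀ j ≠ 0 := by
  apply Finset.prod_ne_zero_iff.2
  intro i _
  split <;> assumption

/-- the two collars -/
def collarSet (α a b β : ℝ) (s : Bool) : Set ℝ := if s then Set.Ico α a else Set.Ioc b β

lemma collarSet_subset {α a b β : ℝ} (s : Bool) :
    collarSet α a b β s ⊆ (if s then Set.Icc α a else Set.Icc b β) := by
  cases s
  · exact fun x hx => ⟨le_of_lt hx.1, hx.2⟩
  · exact fun x hx => ⟨hx.1, le_of_lt hx.2⟩

section Claims

variable {T : ℝ → ℝ} {a b α β mL cL mR cR : ℝ} {dL dR : Bool}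

lemma step_mem (hLside : ∀ x ∈ Set.Icc α a, T x ∈ (if dL then Set.Icc α b else Set.Icc a β))
    (hRside : ∀ x ∈ Set.Icc b β, T x ∈ (if dR then Set.Icc α b else Set.Icc a β))
    (s : Bool) (z : ℝ) (hz : z ∈ collarSet α a b β s) (hnotA : T z ∉ Set.Icc a b) :
    T z ∈ collarSet α a b β (if s then dL else dR) := by
  have hz' : z ∈ (if s then Set.Icc α a else Set.Icc b β) := collarSet_subset s hz
  have hTz : T z ∈ (if (if s then dL else dR) then Set.Icc α b else Set.Icc a β) := by
    cases s
    · exact hRside z hz'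
    · exact hLside z hz'
  rcases Bool.eq_false_or_eq_true (if s then dL else dR) with hd | hd <;> rw [hd] at hTz ⊢
  · have h1 : T z ∈ Set.Icc α b := hTz
    have h2 : T z < a := by
      by_contra h
      exact hnotA ⟨le_of_not_gt h, h1.2⟩
    exact (⟨h1.1, h2⟩ : T z ∈ Set.Ico α a)
  · have h1 : T z ∈ Set.Icc a β := hTz
    have h2 : b < T z := by
      by_contra h
      exact hnotA ⟨h1.1, le_of_not_gt h⟩
    exact (⟨h2, h1.2⟩ : T z ∈ Set.Ioc b β)

lemma step_affine (hLaff : ∀ x ∈ Set.Icc α a, T x = mL * x + cL)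
    (hRaff : ∀ x ∈ Set.Icc b β, T x = mR * x + cR)
    (s : Bool) (z w : ℝ) (hz : z ∈ collarSet α a b β s) (hw : w ∈ collarSet α a b β s) :
    T z - T w = (if s then mL else mR) * (z - w) := by
  have hz' : z ∈ (if s then Set.Icc α a else Set.Icc b β) := collarSet_subset s hz
  have hw' : w ∈ (if s then Set.Icc α a else Set.Icc b β) := collarSet_subset s hw
  cases s
  · rw [hRaff z hz', hRaff w hw']
    show _ = mR * (z - w)
    ring
  · rw [hLaff z hz', hLaff w hw']
    show _ = mL * (z - w)
    ring

lemma itin_mem (hLside : ∀ x ∈ Set.Icc α a, T x ∈ (if dL then Set.Icc α b else Set.Icc a β))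
    (hRside : ∀ x ∈ Set.Icc b β, T x ∈ (if dR then Set.Icc α b else Set.Icc a β))
    (s₀ : Bool) (k : ℕ) (x : ℝ)
    (hG : ∀ j < k, T^[j] x ∉ Set.Icc a b)
    (hx : x ∈ collarSet α a b β s₀) :
    ∀ j < k, T^[j] x ∈ collarSet α a b β (sideItin dL dR s₀ j) := by
  intro j
  induction j with
  | zero => intro _; simpa [sideItin] using hx
  | succ j ih =>
    intro hjk
    have hj : j < k := Nat.lt_of_succ_lt hjk
    have hz := ih hj
    have hnotA : T^[j+1] x ∉ Set.Icc a b := hG (j+1) hjk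
    rw [Function.iterate_succ_apply'] at hnotA ⊢
    rw [sideItin_succ]
    exact step_mem hLside hRside _ _ hz hnotA

lemma itin_affine
    (hLaff : ∀ x ∈ Set.Icc α a, T x = mL * x + cL)
    (hRaff : ∀ x ∈ Set.Icc b β, T x = mR * x + cR)
    (hLside : ∀ x ∈ Set.Icc α a, T x ∈ (if dL then Set.Icc α b else Set.Icc a β))
    (hRside : ∀ x ∈ Set.Icc b β, T x ∈ (if dR then Set.Icc α b else Set.Icc a β))
    (s₀ : Bool) (k : ℕ) (x y : ℝ)
    (hGx : ∀ j < k, T^[j] x ∉ Set.Icc a b) (hxc : x ∈ collarSet α a b β s₀)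
    (hGy : ∀ j < k, T^[j] y ∉ Set.Icc a b) (hyc : y ∈ collarSet α a b β s₀) :
    ∀ j ≤ k, T^[j] x - T^[j] y = lamProd mL mR dL dR s₀ j * (x - y) := by
  intro j
  induction j with
  | zero => intro _; simp [lamProd_zero]
  | succ j ih =>
    intro hjk
    have hj : j < k := Nat.lt_of_succ_le hjk
    have hu := itin_mem hLside hRside s₀ k x hGx hxc j hj
    have hv := itin_mem hLside hRside s₀ k y hGy hyc j hj
    rw [Function.iterate_succ_apply', Function.iterate_succ_apply', lamProd_succ]
    have hstep := step_affine hLaff hRaff (sideItin dL dR s₀ j) _ _ hu hv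
    have hih := ih (le_of_lt hj)
    rw [hstep, hih]
    ring



lemma dynEntourage_dist_swap (T : ℝ → ℝ) (r : ℝ) (m : ℕ) {x y : ℝ}
    (h : (x, y) ∈ dynEntourage T {p : ℝ × ℝ | dist p.1 p.2 < r} m) :
    (y, x) ∈ dynEntourage T {p : ℝ × ℝ | dist p.1 p.2 < r} m := by
  rw [mem_dynEntourage] at h ⊢
  intro k hk
  have := h k hk
  simp only [Set.mem_setOf_eq] at this ⊢
  rwa [dist_comm]

lemma counting (T : ℝ → ℝ) (a b α β mL cL mR cR : ℝ) (dL dR : Bool)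
    (hαa : α ≤ a) (hab : a ≤ b) (hbβ : b ≤ β)
    (hA : Set.MapsTo T (Set.Icc a b) (Set.Icc a b))
    (hK : Set.MapsTo T (Set.Icc α β) (Set.Icc α β))
    (hmL : mL ≠ 0) (hmR : mR ≠ 0)
    (hLaff : ∀ x ∈ Set.Icc α a, T x = mL * x + cL)
    (hRaff : ∀ x ∈ Set.Icc b β, T x = mR * x + cR)
    (hLside : ∀ x ∈ Set.Icc α a, T x ∈ (if dL then Set.Icc α b else Set.Icc a β))
    (hRside : ∀ x ∈ Set.Icc b β, T x ∈ (if dR then Set.Icc α b else Set.Icc a β))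
    (ε : ℝ) (hε : 0 < ε) :
    ∃ B : ℕ, 1 ≤ B ∧ ∀ n : ℕ, 1 ≤ n →
      coverMincard T (Set.Icc α β) {p : ℝ × ℝ | dist p.1 p.2 < ε} n ≤
      ((B * (n+1) : ℕ) : ℕ∞) * coverMincard T (Set.Icc a b) {p : ℝ × ℝ | dist p.1 p.2 < ε/2} n := by
  classical
  set η := ε/2 with hηdef
  have hηpos : 0 < η := by positivity
  set N₀ : ℕ := ⌊(β - α)/η⌋₊ + 1 with hN₀def
  refine ⟨2*N₀+1, by omega, ?_⟩
  intro n hn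
  set Uη := {p : ℝ × ℝ | dist p.1 p.2 < η} with hUηdef
  set Uε := {p : ℝ × ℝ | dist p.1 p.2 < ε} with hUεdef
  have hUηuni : Uη ∈ 𝓤 ℝ := Metric.dist_mem_uniformity hηpos
  have hUηε : Uη ⊆ Uε := by
    intro p hp
    simp only [hUηdef, hUεdef, Set.mem_setOf_eq] at hp ⊢
    rw [hηdef] at hp
    linarith
  have hAne : (Set.Icc a b).Nonempty := Set.nonempty_Icc.2 hab
  have hfin : ∀ m : ℕ, ∃ s : Finset ℝ,
      IsDynCoverOf T (Set.Icc a b) Uη m s ∧ (s.card : ℕ∞) = coverMincard T (Set.Icc a b) Uη m :=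
    fun m => (coverMincard_finite_iff T (Set.Icc a b) Uη m).1
      (coverMincard_finite_of_isCompact_invariant isCompact_Icc hA hUηuni m)
  choose t ht htc using hfin
  -- bound on iterated differences
  have haff : ∀ (s : Bool) (k : ℕ) (x y : ℝ),
      x ∈ Set.Icc α β → (∀ j < k, T^[j] x ∉ Set.Icc a b) → x ∈ collarSet α a b β s →
      y ∈ Set.Icc α β → (∀ j < k, T^[j] y ∉ Set.Icc a b) → y ∈ collarSet α a b β s →
      ∀ j ≤ k, |lamProd mL mR dL dR s j| * |x - y| ≤ β - α := by
    intro s k x y hxK hxG hxc hyK hyG hyc j hj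
    have h1 := itin_affine hLaff hRaff hLside hRside s k x y hxG hxc hyG hyc j hj
    have h2 : |T^[j] x - T^[j] y| ≤ β - α := by
      have hx' : T^[j] x ∈ Set.Icc α β := hK.iterate j hxK
      have hy' : T^[j] y ∈ Set.Icc α β := hK.iterate j hyK
      rw [abs_sub_le_iff]
      constructor <;> [skip; skip] <;>
        · obtain ⟨h3, h4⟩ := hx'; obtain ⟨h5, h6⟩ := hy'; linarith
    calc |lamProd mL mR dL dR s j| * |x - y| = |T^[j] x - T^[j] y| := by
          rw [h1, abs_mul]
      _ ≤ β - α := h2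
  -- maxima of |lamProd| over j ≤ k
  have hMex : ∀ (k : ℕ) (s : Bool), ∃ M : ℝ, 0 < M ∧
      (∀ j ≤ k, |lamProd mL mR dL dR s j| ≤ M) ∧ (∃ j ≤ k, M = |lamProd mL mR dL dR s j|) := by
    intro k s
    obtain ⟨j₀, hj₀mem, hj₀max⟩ := Finset.exists_max_image (Finset.range (k+1))
      (fun j => |lamProd mL mR dL dR s j|) (Finset.nonempty_range_add_one)
    refine ⟨|lamProd mL mR dL dR s j₀|, abs_pos.2 (lamProd_ne_zero mL mR dL dR s hmL hmR j₀),
      fun j hj => hj₀max j (Finset.mem_range_succ_iff.2 hj), j₀, Finset.mem_range_succ_iff.1 hj₀mem, rfl⟩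
  choose M hMpos hMle hMeq using hMex
  -- infima of collar pieces
  have hrefex : ∀ (k : ℕ) (s : Bool), ∃ r : ℝ,
      (∀ y, y ∈ Set.Icc α β → (∀ j < k, T^[j] y ∉ Set.Icc a b) → y ∈ collarSet α a b β s →
        r ≤ y ∧ y - r ≤ (β - α)/(M k s)) := by
    intro k s
    set Gc := {y : ℝ | y ∈ Set.Icc α β ∧ (∀ j < k, T^[j] y ∉ Set.Icc a b)
      ∧ y ∈ collarSet α a b β s} with hGcdef
    by_cases hne : Gc.Nonempty
    · have hbdd : BddBelow Gc := (bddBelow_Icc (a := β) (b := α)).mono (fun z hz => hz.1)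
      refine ⟨sInf Gc, fun y hyK hyG hyc => ?_⟩
      have hyGc : y ∈ Gc := by
        simp only [hGcdef, Set.mem_setOf_eq]
        exact ⟨hyK, hyG, hyc⟩
      constructor
      · exact csInf_le hbdd hyGc
      · have hlow : ∀ z ∈ Gc, y - (β - α)/(M k s) ≤ z := by
          intro z hz
          obtain ⟨j₀, hj₀k, hMeq'⟩ := hMeq k s
          have := haff s k y z hyK hyG hyc hz.1 hz.2.1 hz.2.2 j₀ hj₀k
          rw [← hMeq'] at this
          have habs : |y - z| ≤ (β - α)/(M k s) := by
            rw [le_div_iff₀ (hMpos k s)]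
            calc |y - z| * M k s = M k s * |y - z| := by ring
              _ ≤ β - α := this
          have := (abs_le.1 habs).2
          linarith
        have := le_csInf hne hlow
        linarith
    · refine ⟨0, fun y hyK hyG hyc => absurd ?_ hne⟩
      refine ⟨y, ?_⟩
      simp only [hGcdef, Set.mem_setOf_eq]
      exact ⟨hyK, hyG, hyc⟩
  choose ref href using hrefex
  -- the bins
  set bin : ℕ → Bool → ℝ → ℕ := fun k s y => ⌊(y - ref k s) * M k s / η⌋₊ with hbindef
  have hbin_lt : ∀ (k : ℕ) (s : Bool) (y : ℝ),
      y ∈ Set.Icc α β → (∀ j < k, T^[j] y ∉ Set.Icc a b) → y ∈ collarSet α a b β s →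
      bin k s y < N₀ := by
    intro k s y hyK hyG hyc
    have h1 := href k s y hyK hyG hyc
    have h2 : (y - ref k s) * M k s / η ≤ (β - α)/η := by
      have hnum : (y - ref k s) * M k s ≤ β - α := (le_div_iff₀ (hMpos k s)).1 h1.2
      gcongr
    calc bin k s y ≤ ⌊(β - α)/η⌋₊ := Nat.floor_mono h2
      _ < N₀ := by omega
  have hbin_close : ∀ (k : ℕ) (s : Bool) (x y : ℝ),
      x ∈ Set.Icc α β → (∀ j < k, T^[j] x ∉ Set.Icc a b) → x ∈ collarSet α a b β s →
      y ∈ Set.Icc α β → (∀ j < k, T^[j] y ∉ Set.Icc a b) → y ∈ collarSet α a b β s →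
      bin k s x = bin k s y → |x - y| < η / M k s := by
    intro k s x y hxK hxG hxc hyK hyG hyc hbe
    have hx1 := href k s x hxK hxG hxc
    have hy1 := href k s y hyK hyG hyc
    set u := (x - ref k s) * M k s / η with hudef
    set v := (y - ref k s) * M k s / η with hvdef
    have huv : |u - v| < 1 := by
      have h1 : u < ⌊u⌋₊ + 1 := Nat.lt_floor_add_one u
      have h2 : v < ⌊v⌋₊ + 1 := Nat.lt_floor_add_one v
      have h3 : (⌊u⌋₊ : ℝ) ≤ u := Nat.floor_le
        (div_nonneg (mul_nonneg (by linarith [hx1.1]) (hMpos k s).le) hηpos.le)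
      have h4 : (⌊v⌋₊ : ℝ) ≤ v := Nat.floor_le
        (div_nonneg (mul_nonneg (by linarith [hy1.1]) (hMpos k s).le) hηpos.le)
      have h5 : ⌊u⌋₊ = ⌊v⌋₊ := hbe
      rw [abs_sub_lt_iff]
      constructor <;> [rw [h5] at h1 h3; rw [h5] at h1 h3] <;> linarith
    have huv2 : |u - v| = |x - y| * M k s / η := by
      rw [hudef, hvdef]
      rw [div_sub_div_same, ← sub_mul]
      have : x - ref k s - (y - ref k s) = x - y := by ring
      rw [this, abs_div, abs_mul, abs_of_pos hηpos, abs_of_pos (hMpos k s)]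
    rw [huv2] at huv
    rw [div_lt_iff₀ hηpos] at huv
    rw [lt_div_iff₀ (hMpos k s)]
    linarith
  -- the candidate sets and representatives
  set P : ℕ → Bool → ℕ → ℝ → Set ℝ := fun k s i x =>
    {y : ℝ | y ∈ Set.Icc α β ∧ (∀ j < k, T^[j] y ∉ Set.Icc a b) ∧ y ∈ collarSet α a b β s
      ∧ bin k s y = i ∧ T^[k] y ∈ ball x (dynEntourage T Uη (n-k))} with hPdef
  have hrepex : ∃ rep : ℕ → Bool → ℕ → ℝ → ℝ,
      ∀ k s i x, (P k s i x).Nonempty → rep k s i x ∈ P k s i x := by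
    refine ⟨fun k s i x => if h : (P k s i x).Nonempty then h.some else 0, fun k s i x h => ?_⟩
    show (if h' : (P k s i x).Nonempty then h'.some else 0) ∈ P k s i x
    rw [dif_pos h]
    exact h.some_mem
  obtain ⟨rep, hrep⟩ := hrepex
  set S : Finset ℝ := t n ∪ (Finset.range (n+1)).biUnion (fun k =>
    (Finset.univ : Finset Bool).biUnion (fun s =>
      (Finset.range N₀).biUnion (fun i => (t (n-k)).image (rep k s i)))) with hSdef
  -- S is a dynamical cover of K
  have hcover : IsDynCoverOf T (Set.Icc α β) Uε n (S : Set ℝ) := by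
    intro y hy
    have hcollarcase : ∀ k : ℕ, k ≤ n → 1 ≤ k → (∀ j < k, T^[j] y ∉ Set.Icc a b) →
        T^[k] y ∈ ⋃ x ∈ (t (n-k) : Set ℝ), ball x (dynEntourage T Uη (n-k)) →
        ∃ c ∈ (S : Set ℝ), y ∈ ball c (dynEntourage T Uε n) := by
      intro k hkn hk1 hmin hcov
      have hyA : y ∉ Set.Icc a b := by
        have := hmin 0 hk1
        rwa [Function.iterate_zero_apply] at this
      have hside : ∃ s : Bool, y ∈ collarSet α a b β s := by
        rcases lt_or_ge y a with h | h
        · exact ⟨true, ⟨hy.1, h⟩⟩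
        · refine ⟨false, ⟨?_, hy.2⟩⟩
          rcases lt_or_ge b y with h' | h'
          · exact h'
          · exact absurd ⟨h, h'⟩ hyA
      obtain ⟨s, hys⟩ := hside
      obtain ⟨x, hxt, hxb⟩ := Set.mem_iUnion₂.1 hcov
      have hPy : y ∈ P k s (bin k s y) x := ⟨hy, hmin, hys, rfl, hxb⟩
      have hc := hrep k s (bin k s y) x ⟨y, hPy⟩
      simp only [hPdef, Set.mem_setOf_eq] at hc
      obtain ⟨hcK, hcG, hcs, hcbin, hcball⟩ := hc
      refine ⟨rep k s (bin k s y) x, ?_, ?_⟩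
      · apply Finset.mem_coe.2
        apply Finset.mem_union_right
        refine Finset.mem_biUnion.2 ⟨k, Finset.mem_range.2 (by omega), ?_⟩
        refine Finset.mem_biUnion.2 ⟨s, Finset.mem_univ s, ?_⟩
        refine Finset.mem_biUnion.2 ⟨bin k s y, Finset.mem_range.2 (hbin_lt k s y hy hmin hys), ?_⟩
        exact Finset.mem_image_of_mem _ hxt
      · have hmem : (rep k s (bin k s y) x, y) ∈ dynEntourage T Uε n := by
          rw [mem_dynEntourage]
          intro j hj
          rcases lt_or_ge j k with hjk | hjk
          · -- before entering [a,b] : use the affine structure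
            have haffeq := itin_affine hLaff hRaff hLside hRside s k _ y hcG hcs hmin hys
              j (le_of_lt hjk)
            have hMj := hMle k s j (le_of_lt hjk)
            have hclose := hbin_close k s (rep k s (bin k s y) x) y hcK hcG hcs hy hmin hys hcbin
            simp only [hUεdef, Set.mem_setOf_eq]
            rw [Real.dist_eq, haffeq, abs_mul]
            calc |lamProd mL mR dL dR s j| * |rep k s (bin k s y) x - y|
                ≤ M k s * |rep k s (bin k s y) x - y| :=
                  mul_le_mul_of_nonneg_right hMj (abs_nonneg _)
              _ < M k s * (η / M k s) := by
                  exact mul_lt_mul_of_pos_left hclose (hMpos k s)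
              _ = η := by
                  rw [mul_div_cancel₀ _ (hMpos k s).ne']
              _ < ε := by rw [hηdef]; linarith
          · -- after entering [a,b] : use the cover of [a,b]
            have hm : j - k < n - k := by omega
            have h1 := mem_dynEntourage.1 hxb (j-k) hm
            have h2 := mem_dynEntourage.1 hcball (j-k) hm
            have hiter : ∀ z : ℝ, T^[j-k] (T^[k] z) = T^[j] z := by
              intro z
              rw [← Function.iterate_add_apply]
              congr 1
              omega
            rw [hiter] at h1 h2
            simp only [hUηdef, Set.mem_setOf_eq] at h1 h2
            simp only [hUεdef, Set.mem_setOf_eq]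
            calc dist (T^[j] (rep k s (bin k s y) x)) (T^[j] y)
                ≤ dist (T^[j] (rep k s (bin k s y) x)) (T^[j-k] x)
                  + dist (T^[j-k] x) (T^[j] y) := dist_triangle _ _ _
              _ < η + η := by
                  rw [dist_comm (T^[j] (rep k s (bin k s y) x)) (T^[j-k] x)]
                  exact add_lt_add h2 h1
              _ = ε := by rw [hηdef]; ring
        exact hmem
    by_cases hent : ∃ j, j < n ∧ T^[j] y ∈ Set.Icc a b
    · have hkn := (Nat.find_spec hent).1
      have hkA := (Nat.find_spec hent).2
      have hmin : ∀ j < Nat.find hent, T^[j] y ∉ Set.Icc a b := fun j hj hmem =>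
        Nat.find_min hent hj ⟨hj.trans hkn, hmem⟩
      rcases Nat.eq_zero_or_pos (Nat.find hent) with hk0 | hkpos
      · have hyA : y ∈ Set.Icc a b := by
          rw [hk0] at hkA
          rwa [Function.iterate_zero_apply] at hkA
        obtain ⟨x, hxt, hxb⟩ := ht n hyA
        refine ⟨x, ?_, ?_⟩
        · exact Finset.mem_coe.2 (Finset.mem_union_left _ hxt)
        · exact mem_dynEntourage.2 fun j hj => hUηε (mem_dynEntourage.1 hxb j hj)
      · obtain ⟨c, hcS, hcb⟩ := hcollarcase (Nat.find hent) (le_of_lt hkn) hkpos hmin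
          (by
            obtain ⟨x, hxt, hxb⟩ := ht (n - Nat.find hent) hkA
            exact Set.mem_iUnion₂.2 ⟨x, hxt,
              dynEntourage_dist_swap T η _ (x := T^[Nat.find hent] y) (y := x) hxb⟩)
        exact ⟨c, hcS, dynEntourage_dist_swap T ε n (x := c) (y := y) hcb⟩
    · push_neg at hent
      have ht0ne : (t 0).Nonempty := by
        apply Finset.card_pos.1
        have h0 := htc 0
        rw [coverMincard_zero T hAne Uη] at h0
        have : (t 0).card = 1 := by exact_mod_cast h0
        omega
      obtain ⟨x, hxt⟩ := ht0ne
      obtain ⟨c, hcS, hcb⟩ := hcollarcase n le_rfl hn hent (by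
        rw [Nat.sub_self]
        refine Set.mem_biUnion (Finset.mem_coe.2 hxt) ?_
        simp [dynEntourage_zero, ball])
      exact ⟨c, hcS, dynEntourage_dist_swap T ε n (x := c) (y := y) hcb⟩
  -- cardinality bound
  have hcm : ∀ m, m ≤ n → (t m).card ≤ (t n).card := by
    intro m hm
    have h1 : ((t m).card : ℕ∞) ≤ ((t n).card : ℕ∞) := by
      rw [htc m, htc n]
      exact coverMincard_monotone_time T (Set.Icc a b) Uη hm
    exact_mod_cast h1
  have hcardNat : S.card ≤ (2*N₀+1) * (n+1) * (t n).card := by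
    have h2 : ∀ k ∈ Finset.range (n+1),
        ((Finset.univ : Finset Bool).biUnion fun s =>
          (Finset.range N₀).biUnion fun i => (t (n-k)).image (rep k s i)).card
        ≤ 2 * (N₀ * (t n).card) := by
      intro k hk
      calc ((Finset.univ : Finset Bool).biUnion fun s =>
            (Finset.range N₀).biUnion fun i => (t (n-k)).image (rep k s i)).card
          ≤ ∑ s : Bool, ((Finset.range N₀).biUnion fun i => (t (n-k)).image (rep k s i)).card :=
            Finset.card_biUnion_le
        _ ≤ ∑ _s : Bool, (N₀ * (t n).card) := by
            apply Finset.sum_le_sum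
            intro s _
            calc ((Finset.range N₀).biUnion fun i => (t (n-k)).image (rep k s i)).card
                ≤ ∑ i ∈ Finset.range N₀, ((t (n-k)).image (rep k s i)).card :=
                  Finset.card_biUnion_le
              _ ≤ ∑ _i ∈ Finset.range N₀, (t n).card := by
                  apply Finset.sum_le_sum
                  intro i _
                  exact (Finset.card_image_le).trans (hcm (n-k) (by omega))
              _ = N₀ * (t n).card := by
                  rw [Finset.sum_const, Finset.card_range, smul_eq_mul]
        _ = 2 * (N₀ * (t n).card) := by
            rw [Finset.sum_const, Finset.card_univ, Fintype.card_bool, smul_eq_mul]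
    have h3 : S.card ≤ (t n).card + (n+1) * (2 * (N₀ * (t n).card)) := by
      calc S.card ≤ (t n).card + ((Finset.range (n+1)).biUnion (fun k =>
            (Finset.univ : Finset Bool).biUnion (fun s =>
              (Finset.range N₀).biUnion (fun i => (t (n-k)).image (rep k s i))))).card :=
            Finset.card_union_le _ _
        _ ≤ (t n).card + ∑ k ∈ Finset.range (n+1), 2 * (N₀ * (t n).card) := by
            apply add_le_add_right
            exact Finset.card_biUnion_le.trans (Finset.sum_le_sum h2)
        _ = (t n).card + (n+1) * (2 * (N₀ * (t n).card)) := by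
            rw [Finset.sum_const, Finset.card_range, smul_eq_mul]
    have h4 : (t n).card ≤ (n+1) * (t n).card :=
      Nat.le_mul_of_pos_left _ (Nat.succ_pos n)
    calc S.card ≤ (t n).card + (n+1) * (2 * (N₀ * (t n).card)) := h3
      _ ≤ (n+1) * (t n).card + (n+1) * (2 * (N₀ * (t n).card)) := by
          exact add_le_add_left h4 _
      _ = (2*N₀+1) * (n+1) * (t n).card := by ring
  calc coverMincard T (Set.Icc α β) Uε n ≤ (S.card : ℕ∞) := hcover.coverMincard_le_card
    _ ≤ (((2*N₀+1) * (n+1) * (t n).card : ℕ) : ℕ∞) := by exact_mod_cast hcardNat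
    _ = (((2*N₀+1) * (n+1) : ℕ) : ℕ∞) * ((t n).card : ℕ∞) := by
        rw [Nat.cast_mul]
    _ = (((2*N₀+1) * (n+1) : ℕ) : ℕ∞) * coverMincard T (Set.Icc a b) Uη n := by rw [htc n]



lemma coverEntropy_le_of_affine_collars (T : ℝ → ℝ) (a b α β mL cL mR cR : ℝ) (dL dR : Bool)
    (hαa : α ≤ a) (hab : a ≤ b) (hbβ : b ≤ β)
    (hA : Set.MapsTo T (Set.Icc a b) (Set.Icc a b))
    (hK : Set.MapsTo T (Set.Icc α β) (Set.Icc α β))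
    (hmL : mL ≠ 0) (hmR : mR ≠ 0)
    (hLaff : ∀ x ∈ Set.Icc α a, T x = mL * x + cL)
    (hRaff : ∀ x ∈ Set.Icc b β, T x = mR * x + cR)
    (hLside : ∀ x ∈ Set.Icc α a, T x ∈ (if dL then Set.Icc α b else Set.Icc a β))
    (hRside : ∀ x ∈ Set.Icc b β, T x ∈ (if dR then Set.Icc α b else Set.Icc a β)) :
    coverEntropy T (Set.Icc α β) ≤ coverEntropy T (Set.Icc a b) := by
  have hA_ne : (Set.Icc a b).Nonempty := Set.nonempty_Icc.2 hab
  rw [coverEntropy_eq_iSup_basis Metric.uniformity_basis_dist T (Set.Icc α β)]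
  refine iSup₂_le fun ε hε => ?_
  have hη : (0:ℝ) < ε/2 := by positivity
  have hUη : {p : ℝ × ℝ | dist p.1 p.2 < ε/2} ∈ 𝓤 ℝ := Metric.dist_mem_uniformity hη
  obtain ⟨B, hB1, hcount⟩ := counting T a b α β mL cL mR cR dL dR hαa hab hbβ hA hK hmL hmR
    hLaff hRaff hLside hRside ε hε
  set Uε := {p : ℝ × ℝ | dist p.1 p.2 < ε} with hUεdef
  set Uη := {p : ℝ × ℝ | dist p.1 p.2 < ε/2} with hUηdef
  have key : ∀ n : ℕ, 1 ≤ n →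
      ENNReal.log (coverMincard T (Set.Icc α β) Uε n) / (n : EReal) ≤
      ENNReal.log ((B * (n+1) : ℕ) : ℝ≥0∞) / (n : EReal)
        + ENNReal.log (coverMincard T (Set.Icc a b) Uη n) / (n : EReal) := by
    intro n hn
    have h1 : ENNReal.log (coverMincard T (Set.Icc α β) Uε n)
        ≤ ENNReal.log ((B * (n+1) : ℕ) : ℝ≥0∞)
          + ENNReal.log (coverMincard T (Set.Icc a b) Uη n) := by
      rw [← ENNReal.log_mul_add]
      apply ENNReal.log_monotone
      have := hcount n hn
      have h2 : (↑(coverMincard T (Set.Icc α β) Uε n) : ℝ≥0∞)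
          ≤ ↑(((B * (n+1) : ℕ) : ℕ∞) * coverMincard T (Set.Icc a b) Uη n) :=
        ENat.toENNReal_mono this
      rw [ENat.toENNReal_mul] at h2
      simpa using h2
    calc ENNReal.log (coverMincard T (Set.Icc α β) Uε n) / (n : EReal)
        ≤ (ENNReal.log ((B * (n+1) : ℕ) : ℝ≥0∞)
            + ENNReal.log (coverMincard T (Set.Icc a b) Uη n)) / (n : EReal) :=
          EReal.monotone_div_right_of_nonneg (Nat.cast_nonneg' n) h1
      _ = _ := by
          apply EReal.div_right_distrib_of_nonneg
          · simp only [ENNReal.zero_le_log_iff]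
            exact_mod_cast Nat.one_le_iff_ne_zero.2 (by positivity)
          · simp only [ENNReal.zero_le_log_iff]
            have : 1 ≤ coverMincard T (Set.Icc a b) Uη n :=
              (one_le_coverMincard_iff T _ Uη n).2 hA_ne
            exact_mod_cast ENat.toENNReal_mono this
  have hlimsup : coverEntropyEntourage T (Set.Icc α β) Uε ≤
      Filter.atTop.limsup (fun n : ℕ => ENNReal.log ((B * (n+1) : ℕ) : ℝ≥0∞) / (n : EReal)
        + ENNReal.log (coverMincard T (Set.Icc a b) Uη n) / (n : EReal)) := by
    have hmono : (fun n : ℕ => ENNReal.log (coverMincard T (Set.Icc α β) Uε n) / (n : EReal))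
        ≤ᶠ[Filter.atTop] (fun n : ℕ => ENNReal.log ((B * (n+1) : ℕ) : ℝ≥0∞) / (n : EReal)
          + ENNReal.log (coverMincard T (Set.Icc a b) Uη n) / (n : EReal)) := by
      filter_upwards [Filter.eventually_ge_atTop 1] with n hn
      exact key n hn
    exact Filter.limsup_le_limsup hmono
  have hsplit := @EReal.limsup_add_le ℕ Filter.atTop
    (fun n : ℕ => ENNReal.log ((B * (n+1) : ℕ) : ℝ≥0∞) / (n : EReal))
    (fun n : ℕ => ENNReal.log (coverMincard T (Set.Icc a b) Uη n) / (n : EReal))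
    (by rw [limsup_log_aux B hB1]; exact Or.inl (by simp))
    (by rw [limsup_log_aux B hB1]; exact Or.inl (by simp))
  rw [limsup_log_aux B hB1, zero_add] at hsplit
  refine (hlimsup.trans hsplit).trans ?_
  exact coverEntropyEntourage_le_coverEntropy T (Set.Icc a b) hUη


-- gluing of ContinuousOn on adjacent Icc
lemma continuousOn_Icc_union {g : ℝ → ℝ} {u v w : ℝ} (huv : u ≤ v) (hvw : v ≤ w)
    (h1 : ContinuousOn g (Set.Icc u v)) (h2 : ContinuousOn g (Set.Icc v w)) :
    ContinuousOn g (Set.Icc u w) := by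
  rw [← Set.Icc_union_Icc_eq_Icc huv hvw]
  intro x hx
  rcases hx with hx | hx
  · apply ContinuousWithinAt.union (h1 x hx)
    by_cases hxv : x ∈ Set.Icc v w
    · exact h2 x hxv
    · exact continuousWithinAt_of_notMem_closure (by rwa [isClosed_Icc.closure_eq])
  · apply ContinuousWithinAt.union ?_ (h2 x hx)
    by_cases hxv : x ∈ Set.Icc u v
    · exact h1 x hxv
    · exact continuousWithinAt_of_notMem_closure (by rwa [isClosed_Icc.closure_eq])

end Claims

end EntropyAux

/-- The `j`-th maximal monotonicity interval of an `l`-modal map on `[a,b]` with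
turning points `c 1 < ... < c l`: `I_1 = [a, c 1)`, `I_{l+1} = (c l, b]`, and
`I_j = (c (j-1), c j)` otherwise. -/
def modalInterval (a b : ℝ) (l : ℕ) (c : ℕ → ℝ) (j : ℕ) : Set ℝ :=
  if j = 1 then Set.Ico a (c 1)
  else if j = l + 1 then Set.Ioc (c l) b
  else Set.Ioo (c (j - 1)) (c j)

set_option maxHeartbeats 2000000 in
theorem exists_boundaryAnchored_extension_coverEntropy_eq
    (a b : ℝ) (l : ℕ) (c : ℕ → ℝ) (f : ℝ → ℝ) (up : ℕ → Bool)
    (hab : a < b) (hl : 1 ≤ l)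
    (hc : ∀ i, 1 ≤ i → i < l → c i < c (i + 1)) (hca : a < c 1) (hcb : c l < b)
    (hcont : ContinuousOn f (Set.Icc a b))
    (hmaps : Set.MapsTo f (Set.Icc a b) (Set.Icc a b))
    (hdir : ∀ j, 1 ≤ j → j ≤ l + 1 →
      (if up j then StrictMonoOn f (modalInterval a b l c j)
        else StrictAntiOn f (modalInterval a b l c j)))
    (halt : ∀ j, 1 ≤ j → j ≤ l → up (j + 1) = !up j) :
    ∃ (a' b' : ℝ) (F : ℝ → ℝ), a' ≤ a ∧ b ≤ b' ∧
      ContinuousOn F (Set.Icc a' b') ∧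
      Set.MapsTo F (Set.Icc a' b') (Set.Icc a' b') ∧
      Set.EqOn F f (Set.Icc a b) ∧
      F a' ∈ ({a', b'} : Set ℝ) ∧ F b' ∈ ({a', b'} : Set ℝ) ∧
      (∀ j, 1 ≤ j → j ≤ l + 1 →
        (if up j then StrictMonoOn F (modalInterval a' b' l c j)
          else StrictAntiOn F (modalInterval a' b' l c j))) ∧
      Dynamics.coverEntropy F (Set.Icc a' b') = Dynamics.coverEntropy f (Set.Icc a b) := by
  classical
  -- the chain of turning points
  have hmono : ∀ i, 1 ≤ i → ∀ d, i + d ≤ l → c i ≤ c (i + d) := by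
    intro i hi d
    induction d with
    | zero => intro _; exact le_rfl
    | succ d ih =>
      intro hd
      have h1 : i + d ≤ l := by omega
      have h2 := hc (i + d) (by omega) (by omega)
      have := ih h1
      calc c i ≤ c (i + d) := this
        _ ≤ c (i + d + 1) := (h2).le
  have hc1j : ∀ j, 1 ≤ j → j ≤ l → c 1 ≤ c j := by
    intro j h1 h2
    have := hmono 1 le_rfl (j - 1) (by omega)
    rwa [show 1 + (j-1) = j by omega] at this
  have hcjl : ∀ j, 1 ≤ j → j ≤ l → c j ≤ c l := by
    intro j h1 h2
    have := hmono j h1 (l - j) (by omega)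
    rwa [show j + (l-j) = l by omega] at this
  have hcj_mem : ∀ j, 1 ≤ j → j ≤ l → a < c j ∧ c j < b := by
    intro j h1 h2
    exact ⟨lt_of_lt_of_le hca (hc1j j h1 h2), lt_of_le_of_lt (hcjl j h1 h2) hcb⟩
  -- data of the construction
  set α := a - 1 with hαdef
  set β := b + 1 with hβdef
  set p : ℝ := if up 1 then α else β with hpdef
  set q : ℝ := if up (l+1) then β else α with hqdef
  set mL : ℝ := f a - p with hmLdef
  set mR : ℝ := q - f b with hmRdef
  have hfa : f a ∈ Set.Icc a b := hmaps ⟨le_rfl, hab.le⟩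
  have hfb : f b ∈ Set.Icc a b := hmaps ⟨hab.le, le_rfl⟩
  set F : ℝ → ℝ := fun x =>
    if x < a then f a + (x - a) * mL else if x ≤ b then f x else f b + (x - b) * mR with hFdef
  have hαa : α ≤ a := by rw [hαdef]; linarith
  have hbβ : b ≤ β := by rw [hβdef]; linarith
  -- basic evaluation facts
  have hFeq : Set.EqOn F f (Set.Icc a b) := by
    intro x hx
    simp only [hFdef]
    rw [if_neg (not_lt.2 hx.1), if_pos hx.2]
  have hFlt : ∀ x, x < a → F x = f a + (x - a) * mL := by
    intro x hx
    simp only [hFdef]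
    rw [if_pos hx]
  have hFgt : ∀ x, b < x → F x = f b + (x - b) * mR := by
    intro x hx
    simp only [hFdef]
    rw [if_neg (by push_neg; linarith : ¬ x < a), if_neg (not_le.2 hx)]
  have hFα : F α = p := by
    rw [hFlt α (by rw [hαdef]; linarith)]
    rw [hmLdef, hαdef]
    ring
  have hFβ : F β = q := by
    rw [hFgt β (by rw [hβdef]; linarith)]
    rw [hmRdef, hβdef]
    ring
  have hpmem : p = α ∨ p = β := by
    rw [hpdef]; split <;> simp
  have hqmem : q = α ∨ q = β := by
    rw [hqdef]; split <;> simp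
  -- the slopes are nonzero, with sign given by the direction
  have hmLsign : (up 1 = true ∧ 0 < mL) ∨ (up 1 = false ∧ mL < 0) := by
    rcases Bool.eq_false_or_eq_true (up 1) with h | h
    · refine Or.inl ⟨h, ?_⟩
      rw [hmLdef, hpdef, h, if_pos rfl, hαdef]
      have := hfa.1
      linarith
    · refine Or.inr ⟨h, ?_⟩
      rw [hmLdef, hpdef, h]
      simp only [Bool.false_eq_true, if_false]
      rw [hβdef]
      have := hfa.2
      linarith
  have hmRsign : (up (l+1) = true ∧ 0 < mR) ∨ (up (l+1) = false ∧ mR < 0) := by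
    rcases Bool.eq_false_or_eq_true (up (l+1)) with h | h
    · refine Or.inl ⟨h, ?_⟩
      rw [hmRdef, hqdef, h, if_pos rfl, hβdef]
      have := hfb.2
      linarith
    · refine Or.inr ⟨h, ?_⟩
      rw [hmRdef, hqdef, h]
      simp only [Bool.false_eq_true, if_false]
      rw [hαdef]
      have := hfb.1
      linarith
  -- affine formulas on the collars
  have hLaff : ∀ x ∈ Set.Icc α a, F x = mL * x + (f a - a * mL) := by
    intro x hx
    rcases lt_or_eq_of_le hx.2 with h | h
    · rw [hFlt x h]; ring
    · rw [h, hFeq ⟨le_rfl, hab.le⟩]; ring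
  have hRaff : ∀ x ∈ Set.Icc b β, F x = mR * x + (f b - b * mR) := by
    intro x hx
    rcases lt_or_eq_of_le hx.1 with h | h
    · rw [hFgt x h]; ring
    · rw [← h, hFeq ⟨hab.le, le_rfl⟩]; ring
  -- the collar images
  have hLform : ∀ x ∈ Set.Icc α a, F x = f a + (x - a) * mL := by
    intro x hx
    rw [hLaff x hx]; ring
  have hRform : ∀ x ∈ Set.Icc b β, F x = f b + (x - b) * mR := by
    intro x hx
    rw [hRaff x hx]; ring
  have hLside : ∀ x ∈ Set.Icc α a, F x ∈ (if up 1 then Set.Icc α b else Set.Icc a β) := by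
    intro x hx
    have hFx := hLform x hx
    have hxa : x - a ≤ 0 := by linarith [hx.2]
    have hxα : -1 ≤ x - a := by
      have := hx.1
      rw [hαdef] at this
      linarith
    rcases hmLsign with ⟨h, hs⟩ | ⟨h, hs⟩ <;> rw [h]
    · rw [if_pos rfl, hFx]
      have hmL' : mL = f a - (a - 1) := by rw [hmLdef, hpdef, h, if_pos rfl, hαdef]
      constructor
      · rw [hαdef]
        nlinarith [mul_nonneg (by linarith : (0:ℝ) ≤ x - a + 1) hs.le, hfa.1]
      · nlinarith [mul_nonneg (by linarith : (0:ℝ) ≤ a - x) hs.le, hfa.2]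
    · simp only [Bool.false_eq_true, if_false]
      rw [hFx]
      have hmL' : mL = f a - (b + 1) := by
        rw [hmLdef, hpdef, h]
        simp only [Bool.false_eq_true, if_false]
        rfl
      constructor
      · nlinarith [mul_nonneg (by linarith : (0:ℝ) ≤ a - x) (by linarith : (0:ℝ) ≤ -mL), hfa.1]
      · rw [hβdef]
        nlinarith [mul_nonneg (by linarith : (0:ℝ) ≤ x - a + 1) (by linarith : (0:ℝ) ≤ -mL),
          hfa.2]
  have hRside : ∀ x ∈ Set.Icc b β, F x ∈ (if up (l+1) then Set.Icc a β else Set.Icc α b) := by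
    intro x hx
    have hFx := hRform x hx
    have hxb : 0 ≤ x - b := by linarith [hx.1]
    have hxβ : x - b ≤ 1 := by
      have := hx.2
      rw [hβdef] at this
      linarith
    rcases hmRsign with ⟨h, hs⟩ | ⟨h, hs⟩ <;> rw [h]
    · rw [if_pos rfl, hFx]
      have hmR' : mR = b + 1 - f b := by rw [hmRdef, hqdef, h, if_pos rfl, hβdef]
      constructor
      · nlinarith [mul_nonneg hxb hs.le, hfb.1]
      · rw [hβdef]
        nlinarith [mul_nonneg (by linarith : (0:ℝ) ≤ 1 - (x - b)) hs.le, hfb.2]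
    · simp only [Bool.false_eq_true, if_false]
      rw [hFx]
      have hmR' : mR = a - 1 - f b := by
        rw [hmRdef, hqdef, h]
        simp only [Bool.false_eq_true, if_false]
        rfl
      constructor
      · rw [hαdef]
        nlinarith [mul_nonneg (by linarith : (0:ℝ) ≤ 1 - (x - b)) (by linarith : (0:ℝ) ≤ -mR),
          hfb.1]
      · nlinarith [mul_nonneg hxb (by linarith : (0:ℝ) ≤ -mR), hfb.2]
  have hmLne : mL ≠ 0 := by
    rcases hmLsign with ⟨_, hs⟩ | ⟨_, hs⟩
    · exact ne_of_gt hs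
    · exact ne_of_lt hs
  have hmRne : mR ≠ 0 := by
    rcases hmRsign with ⟨_, hs⟩ | ⟨_, hs⟩
    · exact ne_of_gt hs
    · exact ne_of_lt hs
  -- maps to itself
  have hsubK : Set.Icc a b ⊆ Set.Icc α β := fun x hx => ⟨hαa.trans hx.1, hx.2.trans hbβ⟩
  have hFA : Set.MapsTo F (Set.Icc a b) (Set.Icc a b) := by
    intro x hx
    rw [hFeq hx]
    exact hmaps hx
  have hFK : Set.MapsTo F (Set.Icc α β) (Set.Icc α β) := by
    intro x hx
    rcases lt_or_ge x a with h | h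
    · have h1 := hLside x ⟨hx.1, h.le⟩
      rcases Bool.eq_false_or_eq_true (up 1) with h2 | h2 <;> rw [h2] at h1
      · rw [if_pos rfl] at h1
        exact ⟨h1.1, h1.2.trans hbβ⟩
      · simp only [Bool.false_eq_true, if_false] at h1
        exact ⟨hαa.trans h1.1, h1.2⟩
    · rcases le_or_gt x b with h2 | h2
      · exact hsubK (hFA ⟨h, h2⟩)
      · have h1 := hRside x ⟨h2.le, hx.2⟩
        rcases Bool.eq_false_or_eq_true (up (l+1)) with h3 | h3 <;> rw [h3] at h1
        · rw [if_pos rfl] at h1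
          exact ⟨hαa.trans h1.1, h1.2⟩
        · simp only [Bool.false_eq_true, if_false] at h1
          exact ⟨h1.1, h1.2.trans hbβ⟩
  -- continuity
  have hFC : ContinuousOn F (Set.Icc α β) := by
    have h1 : ContinuousOn F (Set.Icc α a) :=
      ((by fun_prop : Continuous fun x : ℝ => mL * x + (f a - a * mL)).continuousOn).congr hLaff
    have h2 : ContinuousOn F (Set.Icc a b) := hcont.congr hFeq
    have h3 : ContinuousOn F (Set.Icc b β) :=
      ((by fun_prop : Continuous fun x : ℝ => mR * x + (f b - b * mR)).continuousOn).congr hRaff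
    exact EntropyAux.continuousOn_Icc_union hαa (hab.le.trans hbβ) h1
      (EntropyAux.continuousOn_Icc_union hab.le hbβ h2 h3)
  -- strict monotonicity on the monotonicity intervals
  have hmodal : ∀ j, 1 ≤ j → j ≤ l + 1 →
      (if up j then StrictMonoOn F (modalInterval α β l c j)
        else StrictAntiOn F (modalInterval α β l c j)) := by
    intro j hj1 hjl
    rcases eq_or_ne j 1 with rfl | hne1
    · -- first interval
      have hmi : modalInterval α β l c 1 = Set.Ico α (c 1) := by simp [modalInterval]
      have hmi' : modalInterval a b l c 1 = Set.Ico a (c 1) := by simp [modalInterval]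
      have hc1b : c 1 ≤ b := (hcjl 1 le_rfl hl).trans hcb.le
      have hsub1 : Set.Ico a (c 1) ⊆ Set.Icc a b := fun x hx => ⟨hx.1, hx.2.le.trans hc1b⟩
      have hd := hdir 1 le_rfl (by omega)
      rw [hmi'] at hd
      rw [hmi]
      rcases hmLsign with ⟨h, hs⟩ | ⟨h, hs⟩ <;> rw [h] at hd ⊢
      · rw [if_pos rfl] at hd ⊢
        intro x hx y hy hxy
        rcases lt_or_ge y a with hya | hya
        · rw [hFlt x (hxy.trans hya), hFlt y hya]
          nlinarith
        · rcases lt_or_ge x a with hxa | hxa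
          · have h1 : F x < f a := by
              rw [hFlt x hxa]
              nlinarith
            have h2 : f a ≤ F y := by
              rcases eq_or_lt_of_le hya with h3 | h3
              · rw [← h3, hFeq ⟨le_rfl, hab.le⟩]
              · rw [hFeq (hsub1 ⟨hya, hy.2⟩)]
                exact (hd ⟨le_rfl, hca⟩ ⟨hya, hy.2⟩ h3).le
            linarith
          · rw [hFeq (hsub1 ⟨hxa, hx.2⟩), hFeq (hsub1 ⟨hya, hy.2⟩)]
            exact hd ⟨hxa, hx.2⟩ ⟨hya, hy.2⟩ hxy
      · simp only [Bool.false_eq_true, if_false] at hd ⊢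
        intro x hx y hy hxy
        rcases lt_or_ge y a with hya | hya
        · rw [hFlt x (hxy.trans hya), hFlt y hya]
          nlinarith
        · rcases lt_or_ge x a with hxa | hxa
          · have h1 : f a < F x := by
              rw [hFlt x hxa]
              nlinarith
            have h2 : F y ≤ f a := by
              rcases eq_or_lt_of_le hya with h3 | h3
              · rw [← h3, hFeq ⟨le_rfl, hab.le⟩]
              · rw [hFeq (hsub1 ⟨hya, hy.2⟩)]
                exact (hd ⟨le_rfl, hca⟩ ⟨hya, hy.2⟩ h3).le
            linarith
          · rw [hFeq (hsub1 ⟨hxa, hx.2⟩), hFeq (hsub1 ⟨hya, hy.2⟩)]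
            exact hd ⟨hxa, hx.2⟩ ⟨hya, hy.2⟩ hxy
    rcases eq_or_ne j (l+1) with rfl | hnel1
    · -- last interval
      have hmi : modalInterval α β l c (l+1) = Set.Ioc (c l) β := by
        rw [modalInterval, if_neg (by omega : l + 1 ≠ 1), if_pos rfl]
      have hmi' : modalInterval a b l c (l+1) = Set.Ioc (c l) b := by
        rw [modalInterval, if_neg (by omega : l + 1 ≠ 1), if_pos rfl]
      have hacl : a ≤ c l := (hcj_mem l hl le_rfl).1.le
      have hsub1 : Set.Ioc (c l) b ⊆ Set.Icc a b := fun x hx => ⟨hacl.trans hx.1.le, hx.2⟩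
      have hd := hdir (l+1) (by omega) le_rfl
      rw [hmi'] at hd
      rw [hmi]
      rcases hmRsign with ⟨h, hs⟩ | ⟨h, hs⟩ <;> rw [h] at hd ⊢
      · rw [if_pos rfl] at hd ⊢
        intro x hx y hy hxy
        rcases le_or_gt x b with hxb | hxb
        · rcases le_or_gt y b with hyb | hyb
          · rw [hFeq (hsub1 ⟨hx.1, hxb⟩), hFeq (hsub1 ⟨hy.1, hyb⟩)]
            exact hd ⟨hx.1, hxb⟩ ⟨hy.1, hyb⟩ hxy
          · have h1 : F x ≤ f b := by
              rw [hFeq (hsub1 ⟨hx.1, hxb⟩)]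
              rcases eq_or_lt_of_le hxb with h3 | h3
              · rw [h3]
              · exact (hd ⟨hx.1, hxb⟩ ⟨hcb, le_rfl⟩ h3).le
            have h2 : f b < F y := by
              rw [hFgt y hyb]
              nlinarith
            linarith
        · have hyb : b < y := hxb.trans hxy
          rw [hFgt x hxb, hFgt y hyb]
          nlinarith
      · simp only [Bool.false_eq_true, if_false] at hd ⊢
        intro x hx y hy hxy
        rcases le_or_gt x b with hxb | hxb
        · rcases le_or_gt y b with hyb | hyb
          · rw [hFeq (hsub1 ⟨hx.1, hxb⟩), hFeq (hsub1 ⟨hy.1, hyb⟩)]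
            exact hd ⟨hx.1, hxb⟩ ⟨hy.1, hyb⟩ hxy
          · have h1 : f b ≤ F x := by
              rw [hFeq (hsub1 ⟨hx.1, hxb⟩)]
              rcases eq_or_lt_of_le hxb with h3 | h3
              · rw [h3]
              · exact (hd ⟨hx.1, hxb⟩ ⟨hcb, le_rfl⟩ h3).le
            have h2 : F y < f b := by
              rw [hFgt y hyb]
              nlinarith
            linarith
        · have hyb : b < y := hxb.trans hxy
          rw [hFgt x hxb, hFgt y hyb]
          nlinarith
    · -- middle intervals
      have hj2 : 2 ≤ j := by omega
      have hjle : j ≤ l := by omega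
      have hmi : modalInterval α β l c j = Set.Ioo (c (j-1)) (c j) := by
        rw [modalInterval, if_neg hne1, if_neg hnel1]
      have hmi' : modalInterval a b l c j = Set.Ioo (c (j-1)) (c j) := by
        rw [modalInterval, if_neg hne1, if_neg hnel1]
      have hsub1 : Set.Ioo (c (j-1)) (c j) ⊆ Set.Icc a b := by
        intro x hx
        have h1 := (hcj_mem (j-1) (by omega) (by omega)).1
        have h2 := (hcj_mem j (by omega) hjle).2
        exact ⟨(h1.trans hx.1).le, (hx.2.trans h2).le⟩
      have hd := hdir j hj1 hjl
      rw [hmi'] at hd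
      rw [hmi]
      rcases Bool.eq_false_or_eq_true (up j) with h | h <;> rw [h] at hd ⊢
      · rw [if_pos rfl] at hd ⊢
        intro x hx y hy hxy
        rw [hFeq (hsub1 hx), hFeq (hsub1 hy)]
        exact hd hx hy hxy
      · simp only [Bool.false_eq_true, if_false] at hd ⊢
        intro x hx y hy hxy
        rw [hFeq (hsub1 hx), hFeq (hsub1 hy)]
        exact hd hx hy hxy
  -- the entropy
  have hRside' : ∀ x ∈ Set.Icc b β,
      F x ∈ (if !up (l+1) then Set.Icc α b else Set.Icc a β) := by
    intro x hx
    have h1 := hRside x hx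
    rcases Bool.eq_false_or_eq_true (up (l+1)) with h2 | h2 <;> rw [h2] at h1 ⊢
    · rw [if_pos rfl] at h1
      simp only [Bool.not_true, Bool.false_eq_true, if_false]
      exact h1
    · simp only [Bool.false_eq_true, if_false] at h1
      simp only [Bool.not_false, if_true]
      exact h1
  have hent_eq : Dynamics.coverEntropy F (Set.Icc a b) = Dynamics.coverEntropy f (Set.Icc a b) :=
    EntropyAux.coverEntropy_congr hFA hmaps hFeq
  have hup : Dynamics.coverEntropy F (Set.Icc α β) ≤ Dynamics.coverEntropy f (Set.Icc a b) := by
    rw [← hent_eq]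
    exact EntropyAux.coverEntropy_le_of_affine_collars F a b α β mL (f a - a * mL) mR
      (f b - b * mR) (up 1) (!up (l+1)) hαa hab.le hbβ hFA hFK hmLne hmRne hLaff hRaff
      hLside hRside'
  have hlow : Dynamics.coverEntropy f (Set.Icc a b) ≤ Dynamics.coverEntropy F (Set.Icc α β) := by
    rw [← hent_eq]
    exact EntropyAux.coverEntropy_mono_set F hsubK
  refine ⟨α, β, F, hαa, hbβ, hFC, hFK, hFeq, ?_, ?_, hmodal, le_antisymm hup hlow⟩
  · rw [hFα]
    rcases hpmem with h | h <;> rw [h] <;> simp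
  · rw [hFβ]
    rcases hqmem with h | h <;> rw [h] <;> simp
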